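/- arXiv:2105.01231 — 2 statements merged into one kernel-verified Lean document; each statement's English description precedes it below -/
import Mathlib

section
/- Let f₁,…,f_m : ℝ^p → ℝ be differentiable with L-Lipschitz gradients, and let f = (1/m)∑_{i=1}^m f_i (which is then also L-smooth). For any points x₁,…,x_m ∈ ℝ^p with average x̄ = (1/m)∑_{i=1}^m x_i, any v̄ ∈ ℝ^p, and any η ≥ 0, setting ḡ = (1/m)∑_{i=1}^m ∇f_i(x_i) and x̄⁺ = x̄ − η v̄, one has: f(x̄⁺) ≤ f(x̄) − (η/2)‖∇f(x̄)‖² − (η/2 − Lη²/2)‖v̄‖² + η ‖v̄ − ḡ‖² + (L²η/m) ∑_{i=1}^m ‖x_i − x̄‖². -/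
set_option autoImplicit false

open Finset BigOperators InnerProductSpace
set_option maxHeartbeats 1000000



section Aux
variable {E : Type*} [NormedAddCommGroup E] [InnerProductSpace ℝ E] [CompleteSpace E]

lemma my_descent (L : ℝ) (F : E → ℝ) (G : E → E)
    (hG : ∀ y, HasGradientAt F (G y) y)
    (hlip : ∀ a b, ‖G a - G b‖ ≤ L * ‖a - b‖) (x y : E) :
    F y ≤ F x + inner ℝ (G x) (y - x) + L / 2 * ‖y - x‖ ^ 2 := by
  set d := y - x with hd
  have hline : ∀ t : ℝ, HasDerivAt (fun t : ℝ => x + t • d) d t := fun t => by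
    simpa using ((hasDerivAt_id t).smul_const d).const_add x
  have hFd : ∀ t : ℝ, HasDerivAt (fun t : ℝ => F (x + t • d))
      (inner ℝ (G (x + t • d)) d) t := by
    intro t
    have h1 := ((hG (x + t • d)).hasFDerivAt).comp_hasDerivAt t (hline t)
    exact h1
  set h : ℝ → ℝ := fun t => F (x + t • d) - t * inner ℝ (G x) d - L / 2 * t ^ 2 * ‖d‖ ^ 2
    with hh
  have hderiv : ∀ t : ℝ, HasDerivAt h
      (inner ℝ (G (x + t • d)) d - inner ℝ (G x) d - L * t * ‖d‖ ^ 2) t := by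
    intro t
    have h2 : HasDerivAt (fun t : ℝ => t * inner ℝ (G x) d) (inner ℝ (G x) d) t := by
      simpa using (hasDerivAt_id t).mul_const (inner ℝ (G x) d : ℝ)
    have h3 : HasDerivAt (fun t : ℝ => L / 2 * t ^ 2 * ‖d‖ ^ 2) (L * t * ‖d‖ ^ 2) t := by
      have := ((hasDerivAt_pow 2 t).const_mul (L / 2)).mul_const (‖d‖ ^ 2)
      refine this.congr_deriv ?_
      ring
    exact ((hFd t).sub h2).sub h3
  have hmono : AntitoneOn h (Set.Icc 0 1) := by
    apply antitoneOn_of_deriv_nonpos (convex_Icc 0 1)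
    · have : Differentiable ℝ h := fun t => (hderiv t).differentiableAt
      exact this.continuous.continuousOn
    · intro t _
      exact (hderiv t).differentiableAt.differentiableWithinAt
    · intro t ht
      rw [(hderiv t).deriv]
      rw [interior_Icc] at ht
      have hsub : (inner ℝ (G (x + t • d)) d : ℝ) - inner ℝ (G x) d
          = inner ℝ (G (x + t • d) - G x) d := by rw [inner_sub_left]
      rw [hsub]
      have hb : (inner ℝ (G (x + t • d) - G x) d : ℝ) ≤ L * t * ‖d‖ ^ 2 := by
        calc (inner ℝ (G (x + t • d) - G x) d : ℝ)
            ≤ ‖G (x + t • d) - G x‖ * ‖d‖ := real_inner_le_norm _ _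
          _ ≤ (L * ‖(x + t • d) - x‖) * ‖d‖ :=
              mul_le_mul_of_nonneg_right (hlip _ _) (norm_nonneg _)
          _ = L * t * ‖d‖ ^ 2 := by
              simp [norm_smul, abs_of_pos ht.1]; ring
      linarith
  have h10 : h 1 ≤ h 0 := hmono (by norm_num) (by norm_num) (by norm_num)
  simp only [hh, one_smul, zero_smul, add_zero, one_pow, zero_pow, mul_zero, zero_mul,
    mul_one, sub_zero, one_mul] at h10
  have hx : x + d = y := by rw [hd]; abel
  rw [hx] at h10
  linarith

lemma avg_sq_norm_bound {m : ℕ} (hm : 1 ≤ m) (a : Fin m → E) :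
    ‖(m : ℝ)⁻¹ • ∑ i, a i‖ ^ 2 ≤ (m : ℝ)⁻¹ * ∑ i, ‖a i‖ ^ 2 := by
  have hm0 : (0 : ℝ) < m := by exact_mod_cast hm
  have h1 : ‖(m : ℝ)⁻¹ • ∑ i, a i‖ = (m : ℝ)⁻¹ * ‖∑ i, a i‖ := by
    rw [norm_smul]; simp [abs_of_pos (inv_pos.mpr hm0)]
  have h2 : ‖∑ i, a i‖ ≤ ∑ i, ‖a i‖ := norm_sum_le _ _
  have h3 : (∑ i, ‖a i‖) ^ 2 ≤ (m : ℝ) * ∑ i, ‖a i‖ ^ 2 := by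
    have := sq_sum_le_card_mul_sum_sq (s := Finset.univ) (f := fun i => ‖a i‖)
    simpa using this
  have h4 : ‖∑ i, a i‖ ^ 2 ≤ (m : ℝ) * ∑ i, ‖a i‖ ^ 2 := by
    have := pow_le_pow_left₀ (norm_nonneg _) h2 2
    linarith
  rw [h1, mul_pow]
  rw [show ((m:ℝ)⁻¹)^2 = (m:ℝ)⁻¹ * (m:ℝ)⁻¹ by ring]
  rw [mul_assoc]
  apply mul_le_mul_of_nonneg_left _ (by positivity)
  calc (m:ℝ)⁻¹ * ‖∑ i, a i‖ ^ 2 ≤ (m:ℝ)⁻¹ * ((m : ℝ) * ∑ i, ‖a i‖ ^ 2) :=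
        mul_le_mul_of_nonneg_left h4 (by positivity)
    _ = ∑ i, ‖a i‖ ^ 2 := by field_simp

end Aux


/-- **Descent Lemma, deterministic form of Lemma 2.**
Let `f₁,…,f_m : ℝ^p → ℝ` be differentiable with `L`-Lipschitz gradients `g₁,…,g_m`, and let
`f = (1/m)∑ᵢ fᵢ` (whose gradient at `y` is `(1/m)∑ᵢ gᵢ(y)`).  For any points `x₁,…,x_m` with
average `x̄`, any `v̄ ∈ ℝ^p` and any `η ≥ 0`, setting `ḡ = (1/m)∑ᵢ gᵢ(xᵢ)` and
`x̄⁺ = x̄ − η v̄`, one has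
`f(x̄⁺) ≤ f(x̄) − (η/2)‖∇f(x̄)‖² − (η/2 − Lη²/2)‖v̄‖² + η‖v̄ − ḡ‖² + (L²η/m)∑ᵢ‖xᵢ − x̄‖²`. -/
theorem gt_storm_descent_lemma
    (m p : ℕ) (hm : 1 ≤ m) (L : ℝ) (hL : 0 < L)
    (f : Fin m → EuclideanSpace ℝ (Fin p) → ℝ)
    (g : Fin m → EuclideanSpace ℝ (Fin p) → EuclideanSpace ℝ (Fin p))
    (hgrad : ∀ i x, HasGradientAt (f i) (g i x) x)
    (hlip : ∀ i x y, ‖g i x - g i y‖ ≤ L * ‖x - y‖)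
    (F : EuclideanSpace ℝ (Fin p) → ℝ)
    (hF : ∀ y, F y = (m : ℝ)⁻¹ * ∑ i, f i y)
    (x : Fin m → EuclideanSpace ℝ (Fin p))
    (xbar : EuclideanSpace ℝ (Fin p))
    (hxbar : xbar = (m : ℝ)⁻¹ • ∑ i, x i)
    (vbar : EuclideanSpace ℝ (Fin p))
    (η : ℝ) (hη : 0 ≤ η)
    (gbar : EuclideanSpace ℝ (Fin p))
    (hgbar : gbar = (m : ℝ)⁻¹ • ∑ i, g i (x i))
    (xbarplus : EuclideanSpace ℝ (Fin p))
    (hxbarplus : xbarplus = xbar - η • vbar) :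
    F xbarplus
      ≤ F xbar - (η / 2) * ‖(m : ℝ)⁻¹ • ∑ i, g i xbar‖ ^ 2
        - (η / 2 - L * η ^ 2 / 2) * ‖vbar‖ ^ 2
        + η * ‖vbar - gbar‖ ^ 2
        + (L ^ 2 * η / m) * ∑ i, ‖x i - xbar‖ ^ 2 := by
  have hm0 : (0 : ℝ) < m := by exact_mod_cast hm
  set G : EuclideanSpace ℝ (Fin p) → EuclideanSpace ℝ (Fin p) := fun y => (m : ℝ)⁻¹ • ∑ i, g i y with hG
  -- F has gradient G
  have hFgrad : ∀ y : EuclideanSpace ℝ (Fin p), HasGradientAt F (G y) y := by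
    intro y
    rw [hasGradientAt_iff_hasFDerivAt]
    have hsum : HasFDerivAt (fun z : EuclideanSpace ℝ (Fin p) => ∑ i, f i z)
        (∑ i, (toDual ℝ (EuclideanSpace ℝ (Fin p))) (g i y)) y :=
      HasFDerivAt.fun_sum fun i _ => (hgrad i y).hasFDerivAt
    have h2 : HasFDerivAt (fun z : EuclideanSpace ℝ (Fin p) => (m : ℝ)⁻¹ * ∑ i, f i z)
        ((m : ℝ)⁻¹ • ∑ i, (toDual ℝ (EuclideanSpace ℝ (Fin p))) (g i y)) y := hsum.const_mul _
    have hfe : F = fun z : EuclideanSpace ℝ (Fin p) => (m : ℝ)⁻¹ * ∑ i, f i z := funext hF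
    rw [hfe]
    refine h2.congr_fderiv ?_
    simp [hG, map_sum, map_smulₛₗ]
  -- G is L-Lipschitz
  have hGlip : ∀ a b : EuclideanSpace ℝ (Fin p), ‖G a - G b‖ ≤ L * ‖a - b‖ := by
    intro a b
    have : G a - G b = (m : ℝ)⁻¹ • ∑ i, (g i a - g i b) := by
      simp [hG, Finset.sum_sub_distrib, smul_sub]
    rw [this, norm_smul]
    simp only [norm_inv, Real.norm_natCast]
    calc ((m : ℝ))⁻¹ * ‖∑ i, (g i a - g i b)‖
        ≤ (m : ℝ)⁻¹ * ∑ i, ‖g i a - g i b‖ :=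
          mul_le_mul_of_nonneg_left (norm_sum_le _ _) (by positivity)
      _ ≤ (m : ℝ)⁻¹ * ∑ _i : Fin m, (L * ‖a - b‖) :=
          mul_le_mul_of_nonneg_left (Finset.sum_le_sum fun i _ => hlip i a b) (by positivity)
      _ = L * ‖a - b‖ := by
          rw [Finset.sum_const]
          simp
          field_simp
  -- descent
  have hdes := my_descent L F G hFgrad hGlip xbar xbarplus
  have hdiff : xbarplus - xbar = -(η • vbar) := by rw [hxbarplus]; abel
  rw [hdiff] at hdes
  have hinner : (inner ℝ (G xbar) (-(η • vbar)) : ℝ) = -(η * inner ℝ (G xbar) vbar) := by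
    rw [inner_neg_right, real_inner_smul_right]
  have hnorm : ‖-(η • vbar)‖ ^ 2 = η ^ 2 * ‖vbar‖ ^ 2 := by
    rw [norm_neg, norm_smul]
    simp [abs_of_nonneg hη]
    ring
  rw [hinner, hnorm] at hdes
  -- polarization
  have hpol : (inner ℝ (G xbar) vbar : ℝ)
      = (‖G xbar‖ ^ 2 + ‖vbar‖ ^ 2 - ‖vbar - G xbar‖ ^ 2) / 2 := by
    have := norm_sub_sq_real vbar (G xbar)
    have hsym : (inner ℝ vbar (G xbar) : ℝ) = inner ℝ (G xbar) vbar := real_inner_comm _ _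
    linarith [this, hsym]
    
  -- split ‖vbar - G xbar‖²
  have hsplit : ‖vbar - G xbar‖ ^ 2 ≤ 2 * ‖vbar - gbar‖ ^ 2 + 2 * ‖gbar - G xbar‖ ^ 2 := by
    have h1 : ‖vbar - G xbar‖ ≤ ‖vbar - gbar‖ + ‖gbar - G xbar‖ := norm_sub_le_norm_sub_add_norm_sub _ _ _
    have h2 := pow_le_pow_left₀ (norm_nonneg (vbar - G xbar)) h1 2
    nlinarith [sq_nonneg (‖vbar - gbar‖ - ‖gbar - G xbar‖)]
  -- bound ‖gbar - G xbar‖²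
  have hgb : ‖gbar - G xbar‖ ^ 2 ≤ L ^ 2 * (m : ℝ)⁻¹ * ∑ i, ‖x i - xbar‖ ^ 2 := by
    have heq : gbar - G xbar = (m : ℝ)⁻¹ • ∑ i, (g i (x i) - g i xbar) := by
      simp [hgbar, hG, Finset.sum_sub_distrib, smul_sub]
    rw [heq]
    calc ‖(m : ℝ)⁻¹ • ∑ i, (g i (x i) - g i xbar)‖ ^ 2
        ≤ (m : ℝ)⁻¹ * ∑ i, ‖g i (x i) - g i xbar‖ ^ 2 :=
          avg_sq_norm_bound hm _
      _ ≤ (m : ℝ)⁻¹ * ∑ i, L ^ 2 * ‖x i - xbar‖ ^ 2 := by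
          apply mul_le_mul_of_nonneg_left _ (by positivity)
          apply Finset.sum_le_sum
          intro i _
          have := hlip i (x i) xbar
          nlinarith [norm_nonneg (g i (x i) - g i xbar), norm_nonneg (x i - xbar), hL.le]
      _ = L ^ 2 * (m : ℝ)⁻¹ * ∑ i, ‖x i - xbar‖ ^ 2 := by
          rw [← Finset.mul_sum]; ring
  -- final arithmetic
  have hGx : ‖(m : ℝ)⁻¹ • ∑ i, g i xbar‖ ^ 2 = ‖G xbar‖ ^ 2 := by rw [hG]
  rw [hGx]
  have hfin : L ^ 2 * η / m * ∑ i, ‖x i - xbar‖ ^ 2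
      = η * (L ^ 2 * (m : ℝ)⁻¹ * ∑ i, ‖x i - xbar‖ ^ 2) := by
    field_simp
  nlinarith [mul_le_mul_of_nonneg_left hsplit (by positivity : (0:ℝ) ≤ η / 2),
    mul_le_mul_of_nonneg_left hgb hη, hdes, hpol, hfin]
end

section
/- Let (Ω, F, P) be a probability space and ζ₁,…,ζ_m mutually independent random elements with ζ_i distributed according to D_i. Let f_i(·;ζ) : ℝ^p → ℝ be differentiable in x for each sample ζ, with f_i(x) = E_{ζ∼D_i}[f_i(x;ζ)] and ∇f_i(x) = E_{ζ∼D_i}[∇f_i(x;ζ)], and assume: (bounded variance) E_{ζ∼D_i}‖∇f_i(x;ζ) − ∇f_i(x)‖² ≤ σ² for all x and i; (L-average smoothness) E_{ζ∼D_i}‖∇f_i(x;ζ) − ∇f_i(y;ζ)‖² ≤ L²‖x − y‖² for all x, y and i. Fix deterministic points x_{i,t−1}, x_{i,t} ∈ ℝ^p (i = 1,…,m), a deterministic vector v̄_{t−1} ∈ ℝ^p, and β ∈ [0,1]. Define u_i = ∇f_i(x_{i,t}; ζ_i), w_i = ∇f_i(x_{i,t}; ζ_i) − ∇f_i(x_{i,t−1};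 ζ_i), their averages ū = (1/m)∑u_i, w̄ = (1/m)∑w_i, the deterministic averages ḡ_t = (1/m)∑_i ∇f_i(x_{i,t}), ḡ_{t−1} = (1/m)∑_i ∇f_i(x_{i,t−1}), and v̄_t = β(v̄_{t−1} + w̄) + (1−β)ū. Then E‖v̄_t − ḡ_t‖² ≤ β² ‖v̄_{t−1} − ḡ_{t−1}‖² + (2β²L²/m) ∑_{i=1}^m ‖x_{i,t} − x_{i,t−1}‖² + 2(1−β)² σ²/m. -/
set_option autoImplicit false

open MeasureTheory Finset BigOperators

lemma aux_sq_add_le {F : Type*} [SeminormedAddCommGroup F] (a b : F) :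
    ‖a + b‖ ^ 2 ≤ 2 * ‖a‖ ^ 2 + 2 * ‖b‖ ^ 2 := by
  nlinarith [norm_add_le a b, norm_nonneg a, norm_nonneg b, norm_nonneg (a+b),
    sq_nonneg (‖a‖ - ‖b‖)]

lemma aux_inner_int {α : Type*} [MeasurableSpace α] {μ : Measure α} {q : ℕ}
    {f h : α → EuclideanSpace ℝ (Fin q)}
    (hf : Integrable f μ) (hh : Integrable h μ)
    (hf2 : Integrable (fun z => ‖f z‖ ^ 2) μ) (hh2 : Integrable (fun z => ‖h z‖ ^ 2) μ) :
    Integrable (fun z => (inner ℝ (f z) (h z) : ℝ)) μ := by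
  refine Integrable.mono' ((hf2.add hh2).div_const 2) (hf.1.inner hh.1) ?_
  filter_upwards with z
  have h1 := abs_real_inner_le_norm (f z) (h z)
  have h2 : ‖f z‖ * ‖h z‖ ≤ (‖f z‖^2 + ‖h z‖^2)/2 := by nlinarith [sq_nonneg (‖f z‖ - ‖h z‖)]
  simpa [Real.norm_eq_abs] using h1.trans h2

lemma aux_sq_sub_int {α : Type*} [MeasurableSpace α] {μ : Measure α} {q : ℕ}
    {f h : α → EuclideanSpace ℝ (Fin q)}
    (hf : Integrable f μ) (hh : Integrable h μ)
    (hf2 : Integrable (fun z => ‖f z‖ ^ 2) μ) (hh2 : Integrable (fun z => ‖h z‖ ^ 2) μ) :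
    Integrable (fun z => ‖f z - h z‖ ^ 2) μ := by
  simp_rw [norm_sub_sq_real]
  exact (hf2.sub ((aux_inner_int hf hh hf2 hh2).const_mul 2)).add hh2

lemma aux_var_le {α : Type*} [MeasurableSpace α] (μ : Measure α) [IsProbabilityMeasure μ] {q : ℕ}
    {f : α → EuclideanSpace ℝ (Fin q)}
    (hf : Integrable f μ) (hf2 : Integrable (fun z => ‖f z‖ ^ 2) μ) :
    ∫ z, ‖f z - ∫ w, f w ∂μ‖ ^ 2 ∂μ ≤ ∫ z, ‖f z‖ ^ 2 ∂μ := by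
  set c := ∫ w, f w ∂μ with hc
  have h1 : ∀ z, ‖f z - c‖ ^ 2 = ‖f z‖ ^ 2 - 2 * inner ℝ (f z) c + ‖c‖ ^ 2 :=
    fun z => norm_sub_sq_real _ _
  have hint : Integrable (fun z => (inner ℝ (f z) c : ℝ)) μ := hf.inner_const c
  have hinn : ∫ z, (inner ℝ (f z) c : ℝ) ∂μ = ‖c‖ ^ 2 := by
    have e1 : ∫ z, (inner ℝ (f z) c : ℝ) ∂μ = ∫ z, (inner ℝ c (f z) : ℝ) ∂μ := by
      congr 1; funext z; exact real_inner_comm _ _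
    rw [e1, integral_inner hf c, ← hc, real_inner_self_eq_norm_sq]
  calc ∫ z, ‖f z - c‖ ^ 2 ∂μ
      = ∫ z, (‖f z‖ ^ 2 - 2 * inner ℝ (f z) c + ‖c‖ ^ 2) ∂μ := by simp_rw [h1]
    _ = ∫ z, (‖f z‖ ^ 2 - 2 * inner ℝ (f z) c) ∂μ + ∫ z, (‖c‖ ^ 2 : ℝ) ∂μ :=
        integral_add (hf2.sub (hint.const_mul 2)) (integrable_const _)
    _ = (∫ z, ‖f z‖ ^ 2 ∂μ - 2 * ∫ z, (inner ℝ (f z) c : ℝ) ∂μ) + ‖c‖ ^ 2 := by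
        rw [integral_sub hf2 (hint.const_mul 2), MeasureTheory.integral_const_mul, integral_const]
        simp
    _ ≤ ∫ z, ‖f z‖ ^ 2 ∂μ := by rw [hinn]; nlinarith [sq_nonneg ‖c‖]

set_option maxHeartbeats 1000000 in
/-- **Error of gradient estimator, Lemma 1.**
Let `ζ₁,…,ζ_m` be mutually independent random samples with `ζᵢ ∼ Dᵢ`, and let
`g i x ζ = ∇fᵢ(x;ζ)` be stochastic gradients with population gradients
`Gpop i x = E_{ζ∼Dᵢ}[g i x ζ]`, satisfying bounded variance (`σ²`) and `L`-average smoothness.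
Fix deterministic points `x_{i,t-1}, x_{i,t}`, a deterministic `v̄_{t-1}` and `β ∈ [0,1]`, and
let `v̄_t = β(v̄_{t-1} + w̄) + (1−β)ū` where `uᵢ = g i x_{i,t} ζᵢ`,
`wᵢ = g i x_{i,t} ζᵢ − g i x_{i,t-1} ζᵢ` and bars denote averages over `i`.  Then
`E‖v̄_t − ḡ_t‖² ≤ β²‖v̄_{t-1} − ḡ_{t-1}‖² + (2β²L²/m)∑ᵢ‖x_{i,t} − x_{i,t-1}‖² + 2(1−β)²σ²/m`. -/
theorem gt_storm_gradient_estimator_error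
    (m p : ℕ) (hm : 1 ≤ m)
    (Z : Type) [MeasurableSpace Z]
    (Ω : Type) [MeasurableSpace Ω] (P : Measure Ω) [IsProbabilityMeasure P]
    (D : Fin m → Measure Z) (hD : ∀ i, IsProbabilityMeasure (D i))
    (ζ : Fin m → Ω → Z)
    (hζmeas : ∀ i, Measurable (ζ i))
    (hζlaw : ∀ i, Measure.map (ζ i) P = D i)
    (hζindep : ProbabilityTheory.iIndepFun ζ P)
    (g : Fin m → EuclideanSpace ℝ (Fin p) → Z → EuclideanSpace ℝ (Fin p))
    (hgint : ∀ i x, Integrable (g i x) (D i))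
    (hgsqint : ∀ i x, Integrable (fun z => ‖g i x z‖ ^ 2) (D i))
    (Gpop : Fin m → EuclideanSpace ℝ (Fin p) → EuclideanSpace ℝ (Fin p))
    (hGpop : ∀ i x, Gpop i x = ∫ z, g i x z ∂(D i))
    (σ L : ℝ)
    (hvar : ∀ i x, ∫ z, ‖g i x z - Gpop i x‖ ^ 2 ∂(D i) ≤ σ ^ 2)
    (hsmooth : ∀ i x y, ∫ z, ‖g i x z - g i y z‖ ^ 2 ∂(D i) ≤ L ^ 2 * ‖x - y‖ ^ 2)
    (xprev xcur : Fin m → EuclideanSpace ℝ (Fin p))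
    (vbarprev : EuclideanSpace ℝ (Fin p))
    (β : ℝ) (hβ : β ∈ Set.Icc (0 : ℝ) 1)
    (gbarcur gbarprev : EuclideanSpace ℝ (Fin p))
    (hgbarcur : gbarcur = (m : ℝ)⁻¹ • ∑ i, Gpop i (xcur i))
    (hgbarprev : gbarprev = (m : ℝ)⁻¹ • ∑ i, Gpop i (xprev i))
    (vbar : Ω → EuclideanSpace ℝ (Fin p))
    (hvbar : ∀ ω, vbar ω
      = β • (vbarprev + (m : ℝ)⁻¹ • ∑ i, (g i (xcur i) (ζ i ω) - g i (xprev i) (ζ i ω)))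
        + (1 - β) • ((m : ℝ)⁻¹ • ∑ i, g i (xcur i) (ζ i ω))) :
    ∫ ω, ‖vbar ω - gbarcur‖ ^ 2 ∂P
      ≤ β ^ 2 * ‖vbarprev - gbarprev‖ ^ 2
        + (2 * β ^ 2 * L ^ 2 / m) * ∑ i, ‖xcur i - xprev i‖ ^ 2
        + 2 * (1 - β) ^ 2 * σ ^ 2 / m := by
  classical
  have hβ0 : 0 ≤ β := hβ.1
  have hβ1 : β ≤ 1 := hβ.2
  have hm' : (1:ℝ) ≤ (m:ℝ) := by exact_mod_cast hm
  have hm0 : (0:ℝ) < (m:ℝ) := by linarith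
  set Y : Fin m → Z → EuclideanSpace ℝ (Fin p) :=
    fun i z => (g i (xcur i) z - Gpop i (xcur i)) - β • (g i (xprev i) z - Gpop i (xprev i))
    with hYdef
  have hcint : ∀ i x, Integrable (fun z => g i x z - Gpop i x) (D i) := by
    intro i x; haveI := hD i
    exact (hgint i x).sub (integrable_const _)
  have hcsqint : ∀ i x, Integrable (fun z => ‖g i x z - Gpop i x‖ ^ 2) (D i) := by
    intro i x; haveI := hD i
    exact aux_sq_sub_int (hgint i x) (integrable_const _) (hgsqint i x) (integrable_const _)
  have hcmean : ∀ i x, ∫ z, (g i x z - Gpop i x) ∂(D i) = 0 := by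
    intro i x; haveI := hD i
    rw [integral_sub (hgint i x) (integrable_const _), integral_const, hGpop]
    simp
  have hbint : ∀ i, Integrable (fun z => β • (g i (xprev i) z - Gpop i (xprev i))) (D i) := by
    intro i; exact (hcint i (xprev i)).smul β
  have hbsqint : ∀ i, Integrable (fun z => ‖β • (g i (xprev i) z - Gpop i (xprev i))‖ ^ 2) (D i) := by
    intro i
    refine ((hcsqint i (xprev i)).const_mul (β ^ 2)).congr ?_
    filter_upwards with z
    rw [norm_smul]; simp [mul_pow, sq_abs]
  have hYint : ∀ i, Integrable (Y i) (D i) := fun i => (hcint i (xcur i)).sub (hbint i)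
  have hYsqint : ∀ i, Integrable (fun z => ‖Y i z‖ ^ 2) (D i) := by
    intro i
    exact aux_sq_sub_int (hcint i (xcur i)) (hbint i) (hcsqint i (xcur i)) (hbsqint i)
  have hYmean : ∀ i, ∫ z, Y i z ∂(D i) = 0 := by
    intro i
    have e : ∫ z, Y i z ∂(D i)
        = ∫ z, (g i (xcur i) z - Gpop i (xcur i)) ∂(D i)
          - β • ∫ z, (g i (xprev i) z - Gpop i (xprev i)) ∂(D i) := by
      rw [hYdef]
      rw [integral_sub (hcint i (xcur i)) (hbint i), integral_smul]
    rw [e, hcmean, hcmean]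
    simp
  have hYsqbound : ∀ i, ∫ z, ‖Y i z‖ ^ 2 ∂(D i)
      ≤ 2 * β ^ 2 * (L ^ 2 * ‖xcur i - xprev i‖ ^ 2) + 2 * (1 - β) ^ 2 * σ ^ 2 := by
    intro i; haveI := hD i
    have hab : Integrable (fun z => g i (xcur i) z - g i (xprev i) z) (D i) :=
      (hgint i (xcur i)).sub (hgint i (xprev i))
    have habsq : Integrable (fun z => ‖g i (xcur i) z - g i (xprev i) z‖ ^ 2) (D i) :=
      aux_sq_sub_int (hgint i (xcur i)) (hgint i (xprev i)) (hgsqint i (xcur i))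
        (hgsqint i (xprev i))
    have hR1 : Integrable (fun z =>
        ‖(g i (xcur i) z - g i (xprev i) z) - (Gpop i (xcur i) - Gpop i (xprev i))‖ ^ 2) (D i) :=
      aux_sq_sub_int hab (integrable_const _) habsq (integrable_const _)
    have hpt : ∀ z, ‖Y i z‖ ^ 2
        ≤ 2 * β ^ 2 * ‖(g i (xcur i) z - g i (xprev i) z) - (Gpop i (xcur i) - Gpop i (xprev i))‖ ^ 2
          + 2 * (1 - β) ^ 2 * ‖g i (xcur i) z - Gpop i (xcur i)‖ ^ 2 := by
      intro z
      have hYz : Y i z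
          = β • ((g i (xcur i) z - g i (xprev i) z) - (Gpop i (xcur i) - Gpop i (xprev i)))
            + (1 - β) • (g i (xcur i) z - Gpop i (xcur i)) := by
        rw [hYdef]; module
      rw [hYz]
      refine (aux_sq_add_le _ _).trans_eq ?_
      rw [norm_smul, norm_smul]
      simp only [Real.norm_eq_abs, mul_pow, sq_abs]
      ring
    have hmono : ∫ z, ‖Y i z‖ ^ 2 ∂(D i)
        ≤ ∫ z, (2 * β ^ 2 * ‖(g i (xcur i) z - g i (xprev i) z)
              - (Gpop i (xcur i) - Gpop i (xprev i))‖ ^ 2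
            + 2 * (1 - β) ^ 2 * ‖g i (xcur i) z - Gpop i (xcur i)‖ ^ 2) ∂(D i) := by
      refine integral_mono (hYsqint i) ?_ hpt
      exact (hR1.const_mul _).add ((hcsqint i (xcur i)).const_mul _)
    have hsplit : ∫ z, (2 * β ^ 2 * ‖(g i (xcur i) z - g i (xprev i) z)
              - (Gpop i (xcur i) - Gpop i (xprev i))‖ ^ 2
            + 2 * (1 - β) ^ 2 * ‖g i (xcur i) z - Gpop i (xcur i)‖ ^ 2) ∂(D i)
        = 2 * β ^ 2 * ∫ z, ‖(g i (xcur i) z - g i (xprev i) z)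
              - (Gpop i (xcur i) - Gpop i (xprev i))‖ ^ 2 ∂(D i)
          + 2 * (1 - β) ^ 2 * ∫ z, ‖g i (xcur i) z - Gpop i (xcur i)‖ ^ 2 ∂(D i) := by
      rw [integral_add (hR1.const_mul _) ((hcsqint i (xcur i)).const_mul _),
        MeasureTheory.integral_const_mul, MeasureTheory.integral_const_mul]
    have t1 : ∫ z, ‖(g i (xcur i) z - g i (xprev i) z)
          - (Gpop i (xcur i) - Gpop i (xprev i))‖ ^ 2 ∂(D i)
        ≤ L ^ 2 * ‖xcur i - xprev i‖ ^ 2 := by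
      have hAB : Gpop i (xcur i) - Gpop i (xprev i)
          = ∫ z, (g i (xcur i) z - g i (xprev i) z) ∂(D i) := by
        rw [integral_sub (hgint i (xcur i)) (hgint i (xprev i)), hGpop, hGpop]
      have hv := aux_var_le (D i) hab habsq
      rw [← hAB] at hv
      exact hv.trans (hsmooth i (xcur i) (xprev i))
    have t2 : ∫ z, ‖g i (xcur i) z - Gpop i (xcur i)‖ ^ 2 ∂(D i) ≤ σ ^ 2 := hvar i (xcur i)
    calc ∫ z, ‖Y i z‖ ^ 2 ∂(D i) ≤ _ := hmono
      _ = _ := hsplit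
      _ ≤ 2 * β ^ 2 * (L ^ 2 * ‖xcur i - xprev i‖ ^ 2) + 2 * (1 - β) ^ 2 * σ ^ 2 := by
          gcongr <;> positivity
  -- transfer to Ω
  have hYaesm : ∀ i, AEStronglyMeasurable (Y i) (Measure.map (ζ i) P) := by
    intro i; rw [hζlaw i]; exact (hYint i).1
  have hXint : ∀ i, Integrable (fun ω => Y i (ζ i ω)) P := by
    intro i
    exact (integrable_map_measure (hYaesm i) (hζmeas i).aemeasurable).mp
      (by rw [hζlaw i]; exact hYint i)
  have hXmean : ∀ i, ∫ ω, Y i (ζ i ω) ∂P = 0 := by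
    intro i
    have h := integral_map (hζmeas i).aemeasurable (hYaesm i)
    rw [hζlaw i] at h
    rw [← h, hYmean i]
  have hXsqaesm : ∀ i, AEStronglyMeasurable (fun z => ‖Y i z‖ ^ 2) (Measure.map (ζ i) P) := by
    intro i; rw [hζlaw i]; exact (hYsqint i).1
  have hXsqint : ∀ i, Integrable (fun ω => ‖Y i (ζ i ω)‖ ^ 2) P := by
    intro i
    exact (integrable_map_measure (hXsqaesm i) (hζmeas i).aemeasurable).mp
      (by rw [hζlaw i]; exact hYsqint i)
  have hXsqval : ∀ i, ∫ ω, ‖Y i (ζ i ω)‖ ^ 2 ∂P = ∫ z, ‖Y i z‖ ^ 2 ∂(D i) := by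
    intro i
    have h := integral_map (hζmeas i).aemeasurable (hXsqaesm i)
    rw [hζlaw i] at h
    exact h.symm
  -- measurable modifications
  have hY'ex : ∀ i, ∃ Y' : Z → EuclideanSpace ℝ (Fin p), Measurable Y' ∧ Y i =ᶠ[ae (D i)] Y' :=
    fun i => ⟨(hYint i).1.mk _, ((hYint i).1.stronglyMeasurable_mk).measurable,
      (hYint i).1.ae_eq_mk⟩
  choose Y' hY'meas hYY' using hY'ex
  have hXX' : ∀ i, (fun ω => Y i (ζ i ω)) =ᶠ[ae P] (fun ω => Y' i (ζ i ω)) := by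
    intro i
    have h2 : Y i =ᶠ[ae (Measure.map (ζ i) P)] Y' i := by rw [hζlaw i]; exact hYY' i
    exact ae_eq_comp (hζmeas i).aemeasurable h2
  have hX'int : ∀ i, Integrable (fun ω => Y' i (ζ i ω)) P := fun i => (hXint i).congr (hXX' i)
  have hX'sqint : ∀ i, Integrable (fun ω => ‖Y' i (ζ i ω)‖ ^ 2) P := by
    intro i
    refine (hXsqint i).congr ?_
    filter_upwards [hXX' i] with ω h
    rw [show Y i (ζ i ω) = Y' i (ζ i ω) from h]
  have hX'mean : ∀ i, ∫ ω, Y' i (ζ i ω) ∂P = 0 := by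
    intro i
    rw [← integral_congr_ae (hXX' i), hXmean i]
  have hX'coordmean : ∀ i k, ∫ ω, Y' i (ζ i ω) k ∂P = 0 := by
    intro i k
    have h := ContinuousLinearMap.integral_comp_comm (EuclideanSpace.proj (𝕜 := ℝ) k) (hX'int i)
    rw [hX'mean i] at h
    exact h.trans (by simp)
  have hcoordle : ∀ (x : EuclideanSpace ℝ (Fin p)) (k : Fin p), |x k| ≤ ‖x‖ := by
    intro x k
    rw [EuclideanSpace.norm_eq, ← Real.sqrt_sq_eq_abs]
    apply Real.sqrt_le_sqrt
    have := Finset.single_le_sum (f := fun i => ‖x i‖ ^ 2) (fun i _ => by positivity)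
      (Finset.mem_univ k)
    simpa [Real.norm_eq_abs, sq_abs] using this
  have hprodint : ∀ i j (k : Fin p),
      Integrable (fun ω => Y' i (ζ i ω) k * Y' j (ζ j ω) k) P := by
    intro i j k
    refine Integrable.mono' (((hX'sqint i).add (hX'sqint j)).div_const 2) ?_ ?_
    · exact (((EuclideanSpace.proj (𝕜 := ℝ) k).continuous.measurable).comp
        ((hY'meas i).comp (hζmeas i))).aestronglyMeasurable.mul
        (((EuclideanSpace.proj (𝕜 := ℝ) k).continuous.measurable).comp
        ((hY'meas j).comp (hζmeas j))).aestronglyMeasurable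
    · filter_upwards with ω
      have h1 := hcoordle (Y' i (ζ i ω)) k
      have h2 := hcoordle (Y' j (ζ j ω)) k
      have h3 : |Y' i (ζ i ω) k * Y' j (ζ j ω) k| = |Y' i (ζ i ω) k| * |Y' j (ζ j ω) k| :=
        abs_mul _ _
      rw [Real.norm_eq_abs, h3]
      have h4 : |Y' i (ζ i ω) k| * |Y' j (ζ j ω) k| ≤ ‖Y' i (ζ i ω)‖ * ‖Y' j (ζ j ω)‖ :=
        mul_le_mul h1 h2 (abs_nonneg _) (norm_nonneg _)
      simp only [Pi.add_apply]
      nlinarith [sq_nonneg (‖Y' i (ζ i ω)‖ - ‖Y' j (ζ j ω)‖)]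
  have hcoordint : ∀ i (k : Fin p), Integrable (fun ω => Y' i (ζ i ω) k) P := by
    intro i k
    refine Integrable.mono' (hX'int i).norm ?_ ?_
    · exact (((EuclideanSpace.proj (𝕜 := ℝ) k).continuous.measurable).comp
        ((hY'meas i).comp (hζmeas i))).aestronglyMeasurable
    · filter_upwards with ω
      simpa [Real.norm_eq_abs] using hcoordle (Y' i (ζ i ω)) k
  -- cross terms vanish
  have hcross : ∀ i j, i ≠ j →
      ∫ ω, (inner ℝ (Y i (ζ i ω)) (Y j (ζ j ω)) : ℝ) ∂P = 0 := by
    intro i j hij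
    have hcong : (fun ω => (inner ℝ (Y i (ζ i ω)) (Y j (ζ j ω)) : ℝ))
        =ᶠ[ae P] (fun ω => (inner ℝ (Y' i (ζ i ω)) (Y' j (ζ j ω)) : ℝ)) := by
      filter_upwards [hXX' i, hXX' j] with ω h1 h2
      rw [show Y i (ζ i ω) = Y' i (ζ i ω) from h1, show Y j (ζ j ω) = Y' j (ζ j ω) from h2]
    rw [integral_congr_ae hcong]
    have hinner : ∀ ω, (inner ℝ (Y' i (ζ i ω)) (Y' j (ζ j ω)) : ℝ)
        = ∑ k, Y' i (ζ i ω) k * Y' j (ζ j ω) k := by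
      intro ω
      simp [PiLp.inner_apply, RCLike.inner_apply, conj_trivial]
      exact Finset.sum_congr rfl fun _ _ => mul_comm _ _
    calc ∫ ω, (inner ℝ (Y' i (ζ i ω)) (Y' j (ζ j ω)) : ℝ) ∂P
        = ∫ ω, ∑ k, Y' i (ζ i ω) k * Y' j (ζ j ω) k ∂P := by
          exact integral_congr_ae (Filter.Eventually.of_forall fun ω => hinner ω)
      _ = ∑ k, ∫ ω, Y' i (ζ i ω) k * Y' j (ζ j ω) k ∂P :=
          integral_finset_sum _ (fun k _ => hprodint i j k)
      _ = 0 := by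
          refine Finset.sum_eq_zero fun k _ => ?_
          have hind : ProbabilityTheory.IndepFun
              (fun ω => Y' i (ζ i ω) k) (fun ω => Y' j (ζ j ω) k) P := by
            have h0 := hζindep.indepFun hij
            exact h0.comp
              (((EuclideanSpace.proj (𝕜 := ℝ) k).continuous.measurable).comp (hY'meas i))
              (((EuclideanSpace.proj (𝕜 := ℝ) k).continuous.measurable).comp (hY'meas j))
          have := hind.integral_fun_mul_eq_mul_integral (hcoordint i k).1 (hcoordint j k).1
          calc ∫ ω, Y' i (ζ i ω) k * Y' j (ζ j ω) k ∂P
              = (∫ ω, Y' i (ζ i ω) k ∂P) * (∫ ω, Y' j (ζ j ω) k ∂P) := this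
            _ = 0 := by rw [hX'coordmean i k, hX'coordmean j k]; ring
  -- decomposition
  have hdecomp : ∀ ω, vbar ω - gbarcur
      = β • (vbarprev - gbarprev) + (m:ℝ)⁻¹ • ∑ i, Y i (ζ i ω) := by
    intro ω
    rw [hvbar ω, hgbarcur, hgbarprev]
    have esum : ∀ (u v : Fin m → EuclideanSpace ℝ (Fin p)),
        ∑ i, (u i - v i) = ∑ i, u i - ∑ i, v i := fun u v => Finset.sum_sub_distrib _ _
    simp only [hYdef, esum, ← Finset.smul_sum]
    module
  set c0 : EuclideanSpace ℝ (Fin p) := vbarprev - gbarprev with hc0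
  have hSint : Integrable (fun ω => ∑ i, Y i (ζ i ω)) P :=
    integrable_finset_sum _ (fun i _ => hXint i)
  have hSsqint : Integrable (fun ω => ‖∑ i, Y i (ζ i ω)‖ ^ 2) P := by
    refine Integrable.mono'
      ((integrable_finset_sum _ (fun i (_ : i ∈ Finset.univ) => hXsqint i)).const_mul (m:ℝ)) ?_ ?_
    · exact hSint.1.norm.pow 2
    · filter_upwards with ω
      have h1 : ‖∑ i, Y i (ζ i ω)‖ ≤ ∑ i, ‖Y i (ζ i ω)‖ := norm_sum_le _ _
      have h2 : (∑ i, ‖Y i (ζ i ω)‖) ^ 2 ≤ (m:ℝ) * ∑ i, ‖Y i (ζ i ω)‖ ^ 2 := by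
        have := sq_sum_le_card_mul_sum_sq (s := Finset.univ) (f := fun i => ‖Y i (ζ i ω)‖)
        simpa using this
      have h0 : (0:ℝ) ≤ ∑ i, ‖Y i (ζ i ω)‖ := Finset.sum_nonneg fun i _ => norm_nonneg _
      rw [Real.norm_eq_abs, abs_of_nonneg (by positivity)]
      nlinarith [norm_nonneg (∑ i, Y i (ζ i ω))]
  have hSmean : ∫ ω, ∑ i, Y i (ζ i ω) ∂P = 0 := by
    rw [integral_finset_sum _ (fun i _ => hXint i)]
    simp [hXmean]
  have hSsqval : ∫ ω, ‖∑ i, Y i (ζ i ω)‖ ^ 2 ∂P = ∑ i, ∫ z, ‖Y i z‖ ^ 2 ∂(D i) := by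
    have hexp : ∀ ω, ‖∑ i, Y i (ζ i ω)‖ ^ 2
        = ∑ i, ∑ j, (inner ℝ (Y i (ζ i ω)) (Y j (ζ j ω)) : ℝ) := by
      intro ω
      rw [← real_inner_self_eq_norm_sq, sum_inner]
      exact Finset.sum_congr rfl fun i _ => inner_sum _ _ _
    calc ∫ ω, ‖∑ i, Y i (ζ i ω)‖ ^ 2 ∂P
        = ∫ ω, ∑ i, ∑ j, (inner ℝ (Y i (ζ i ω)) (Y j (ζ j ω)) : ℝ) ∂P :=
          integral_congr_ae (Filter.Eventually.of_forall fun ω => hexp ω)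
      _ = ∑ i, ∑ j, ∫ ω, (inner ℝ (Y i (ζ i ω)) (Y j (ζ j ω)) : ℝ) ∂P := by
          rw [integral_finset_sum _ (fun i _ => integrable_finset_sum _
            (fun j _ => aux_inner_int (hXint i) (hXint j) (hXsqint i) (hXsqint j)))]
          exact Finset.sum_congr rfl fun i _ => integral_finset_sum _
            (fun j _ => aux_inner_int (hXint i) (hXint j) (hXsqint i) (hXsqint j))
      _ = ∑ i, ∫ ω, (inner ℝ (Y i (ζ i ω)) (Y i (ζ i ω)) : ℝ) ∂P := by
          refine Finset.sum_congr rfl fun i _ => ?_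
          exact Finset.sum_eq_single_of_mem i (Finset.mem_univ i)
            (fun j _ hji => hcross i j (Ne.symm hji))
      _ = ∑ i, ∫ z, ‖Y i z‖ ^ 2 ∂(D i) := by
          refine Finset.sum_congr rfl fun i _ => ?_
          rw [← hXsqval i]
          exact integral_congr_ae (Filter.Eventually.of_forall fun ω =>
            real_inner_self_eq_norm_sq _)
  -- main expansion
  have hS'int : Integrable (fun ω => (m:ℝ)⁻¹ • ∑ i, Y i (ζ i ω)) P := hSint.smul ((m:ℝ)⁻¹)
  have hS'sqint : Integrable (fun ω => ‖(m:ℝ)⁻¹ • ∑ i, Y i (ζ i ω)‖ ^ 2) P := by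
    refine (hSsqint.const_mul (((m:ℝ)⁻¹) ^ 2)).congr ?_
    filter_upwards with ω
    rw [norm_smul]
    simp [mul_pow, sq_abs]
  have hmain : ∫ ω, ‖vbar ω - gbarcur‖ ^ 2 ∂P
      = β ^ 2 * ‖c0‖ ^ 2 + ((m:ℝ)⁻¹) ^ 2 * ∑ i, ∫ z, ‖Y i z‖ ^ 2 ∂(D i) := by
    calc ∫ ω, ‖vbar ω - gbarcur‖ ^ 2 ∂P
        = ∫ ω, ‖β • c0 + (m:ℝ)⁻¹ • ∑ i, Y i (ζ i ω)‖ ^ 2 ∂P :=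
          integral_congr_ae (Filter.Eventually.of_forall fun ω => by simp only [hdecomp ω])
      _ = ∫ ω, (‖β • c0‖ ^ 2 + 2 * inner ℝ (β • c0) ((m:ℝ)⁻¹ • ∑ i, Y i (ζ i ω))
            + ‖(m:ℝ)⁻¹ • ∑ i, Y i (ζ i ω)‖ ^ 2) ∂P :=
          integral_congr_ae (Filter.Eventually.of_forall fun ω => norm_add_sq_real _ _)
      _ = (∫ ω, (‖β • c0‖ ^ 2 + 2 * inner ℝ (β • c0) ((m:ℝ)⁻¹ • ∑ i, Y i (ζ i ω))) ∂P)
            + ∫ ω, ‖(m:ℝ)⁻¹ • ∑ i, Y i (ζ i ω)‖ ^ 2 ∂P :=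
          integral_add ((integrable_const _).add ((hS'int.const_inner _).const_mul 2)) hS'sqint
      _ = β ^ 2 * ‖c0‖ ^ 2 + ((m:ℝ)⁻¹) ^ 2 * ∑ i, ∫ z, ‖Y i z‖ ^ 2 ∂(D i) := by
          rw [integral_add (integrable_const _) ((hS'int.const_inner _).const_mul 2),
            integral_const, MeasureTheory.integral_const_mul, integral_inner hS'int]
          have hz : ∫ ω, (m:ℝ)⁻¹ • ∑ i, Y i (ζ i ω) ∂P = 0 := by
            rw [integral_smul, hSmean, smul_zero]
          rw [hz]
          have hsq : ∫ ω, ‖(m:ℝ)⁻¹ • ∑ i, Y i (ζ i ω)‖ ^ 2 ∂P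
              = ((m:ℝ)⁻¹) ^ 2 * ∑ i, ∫ z, ‖Y i z‖ ^ 2 ∂(D i) := by
            rw [← hSsqval, ← MeasureTheory.integral_const_mul]
            refine integral_congr_ae (Filter.Eventually.of_forall fun ω => ?_)
            simp [norm_smul, mul_pow, sq_abs]
          rw [hsq]
          have hbc : ‖β • c0‖ ^ 2 = β ^ 2 * ‖c0‖ ^ 2 := by
            rw [norm_smul]; simp [mul_pow, sq_abs]
          rw [hbc]
          simp
  -- final arithmetic
  rw [hmain]
  have hsum : ∑ i, ∫ z, ‖Y i z‖ ^ 2 ∂(D i)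
      ≤ 2 * β ^ 2 * L ^ 2 * (∑ i, ‖xcur i - xprev i‖ ^ 2) + (m:ℝ) * (2 * (1 - β) ^ 2 * σ ^ 2) := by
    calc ∑ i, ∫ z, ‖Y i z‖ ^ 2 ∂(D i)
        ≤ ∑ i, (2 * β ^ 2 * (L ^ 2 * ‖xcur i - xprev i‖ ^ 2) + 2 * (1 - β) ^ 2 * σ ^ 2) :=
          Finset.sum_le_sum fun i _ => hYsqbound i
      _ = 2 * β ^ 2 * L ^ 2 * (∑ i, ‖xcur i - xprev i‖ ^ 2) + (m:ℝ) * (2 * (1 - β) ^ 2 * σ ^ 2) := by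
          rw [Finset.sum_add_distrib, ← Finset.mul_sum, ← Finset.mul_sum, Finset.sum_const]
          simp only [Finset.card_univ, Fintype.card_fin, nsmul_eq_mul]
          ring
  have hT : (0:ℝ) ≤ ∑ i, ‖xcur i - xprev i‖ ^ 2 :=
    Finset.sum_nonneg fun i _ => by positivity
  have hminv : (0:ℝ) < (m:ℝ)⁻¹ := by positivity
  have hminvle : (m:ℝ)⁻¹ ≤ 1 := by
    rw [inv_le_one_iff₀]; right; exact hm'
  have hstep : ((m:ℝ)⁻¹) ^ 2 * ∑ i, ∫ z, ‖Y i z‖ ^ 2 ∂(D i)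
      ≤ (2 * β ^ 2 * L ^ 2 / m) * (∑ i, ‖xcur i - xprev i‖ ^ 2)
        + 2 * (1 - β) ^ 2 * σ ^ 2 / m := by
    have h1 : ((m:ℝ)⁻¹) ^ 2 * ∑ i, ∫ z, ‖Y i z‖ ^ 2 ∂(D i)
        ≤ ((m:ℝ)⁻¹) ^ 2 * (2 * β ^ 2 * L ^ 2 * (∑ i, ‖xcur i - xprev i‖ ^ 2)
          + (m:ℝ) * (2 * (1 - β) ^ 2 * σ ^ 2)) := by
      exact mul_le_mul_of_nonneg_left hsum (by positivity)
    refine h1.trans ?_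
    have h2 : ((m:ℝ)⁻¹) ^ 2 * (2 * β ^ 2 * L ^ 2 * (∑ i, ‖xcur i - xprev i‖ ^ 2))
        ≤ (2 * β ^ 2 * L ^ 2 / m) * (∑ i, ‖xcur i - xprev i‖ ^ 2) := by
      have hh : ((m:ℝ)⁻¹) ^ 2 ≤ (m:ℝ)⁻¹ := by nlinarith
      have hKT : (0:ℝ) ≤ 2 * β ^ 2 * L ^ 2 * (∑ i, ‖xcur i - xprev i‖ ^ 2) :=
        mul_nonneg (by positivity) hT
      calc ((m:ℝ)⁻¹) ^ 2 * (2 * β ^ 2 * L ^ 2 * (∑ i, ‖xcur i - xprev i‖ ^ 2))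
          ≤ (m:ℝ)⁻¹ * (2 * β ^ 2 * L ^ 2 * (∑ i, ‖xcur i - xprev i‖ ^ 2)) :=
            mul_le_mul_of_nonneg_right hh hKT
        _ = 2 * β ^ 2 * L ^ 2 / m * (∑ i, ‖xcur i - xprev i‖ ^ 2) := by
            field_simp
    have h3 : ((m:ℝ)⁻¹) ^ 2 * ((m:ℝ) * (2 * (1 - β) ^ 2 * σ ^ 2))
        = 2 * (1 - β) ^ 2 * σ ^ 2 / m := by
      field_simp
    calc ((m:ℝ)⁻¹) ^ 2 * (2 * β ^ 2 * L ^ 2 * (∑ i, ‖xcur i - xprev i‖ ^ 2)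
          + (m:ℝ) * (2 * (1 - β) ^ 2 * σ ^ 2))
        = ((m:ℝ)⁻¹) ^ 2 * (2 * β ^ 2 * L ^ 2 * (∑ i, ‖xcur i - xprev i‖ ^ 2))
          + ((m:ℝ)⁻¹) ^ 2 * ((m:ℝ) * (2 * (1 - β) ^ 2 * σ ^ 2)) := by ring
      _ ≤ (2 * β ^ 2 * L ^ 2 / m) * (∑ i, ‖xcur i - xprev i‖ ^ 2)
          + 2 * (1 - β) ^ 2 * σ ^ 2 / m := by
          rw [h3]; exact add_le_add_left h2 _
  rw [hc0]
  linarith [hstep]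
end
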